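/- Let A be a 5-by-5 reciprocal matrix with (ξ₁, ξ₂, ξ₃, ξ₄) ≠ (0, 0, 0, 0). There exist real numbers X, c and p ≠ 0 such that det(Re(e^{iθ}A) − λI₅) = −λ·(λ⁴ − 2λ²((X² + p²)cos²θ + c²) + ((X² − p²)cos²θ + c²)²) for all θ, λ ∈ ℝ if and only if ξ₂ξ₃ = 0, ξ₂ + ξ₃ ≠ 0, ξ₁ = (√3/2)(ξ₂ + ξ₃) + ξ₃ and ξ₄ = (√3/2)(ξ₂ + ξ₃) + ξ₂. Moreover, in that case the identity holds with p = (√3 − 1)/2, X = (√3 + 1)/2 and c = (1 + √3)√(ξ₂ + ξ₃)/2. (This is the criterion for the Kippenhahn curve of A to consist of the origin and two non-concentric ellipses, with foci √3, −1 and −√3, 1 respectively and minor half-axis c.) -/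

import Mathlib

open Matrix Polynomial

/-- A tridiagonal complex matrix with zero main diagonal whose symmetric
off-diagonal entries have pairwise products equal to one. -/
def IsReciprocal {n : ℕ} (A : Matrix (Fin n) (Fin n) ℂ) : Prop :=
  (∀ i j : Fin n, ((i : ℤ) - (j : ℤ)) ^ 2 ≠ 1 → A i j = 0) ∧
  ∀ i j : Fin n, (j : ℕ) = (i : ℕ) + 1 → A i j * A j i = 1

/-- The Hermitian matrix `Re (e^{iθ} A) = (e^{iθ}A + (e^{iθ}A)*)/2`. -/
noncomputable def RePart {n : ℕ} (θ : ℝ) (A : Matrix (Fin n) (Fin n) ℂ) :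
    Matrix (Fin n) (Fin n) ℂ :=
  (2 : ℂ)⁻¹ • (Complex.exp (θ * Complex.I) • A + (Complex.exp (θ * Complex.I) • A)ᴴ)

lemma prod_entry (a b : ℂ) (hab : a * b = 1) (θ ξ : ℝ)
    (hξ : ξ = (‖a‖ - ‖b‖)^2/4) :
    ((2:ℂ)⁻¹ * (Complex.exp (θ*Complex.I) * a + star (Complex.exp (θ*Complex.I) * b))) *
    ((2:ℂ)⁻¹ * (Complex.exp (θ*Complex.I) * b + star (Complex.exp (θ*Complex.I) * a))) =
    ((ξ + Real.cos θ^2 : ℝ) : ℂ) := by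
  set e := Complex.exp (θ*Complex.I) with he_def
  have hce : (starRingEnd ℂ) e = Complex.exp (-(θ*Complex.I)) := by
    rw [he_def, ← Complex.exp_conj]; congr 1; simp [Complex.conj_I, mul_comm]
  have he : e * (starRingEnd ℂ) e = 1 := by rw [hce, ← Complex.exp_add]; simp
  have hA2 : e^2 = Complex.exp ((2*θ:ℝ) * Complex.I) := by
    rw [sq, he_def, ← Complex.exp_add]; congr 1; push_cast; ring
  have hB2 : ((starRingEnd ℂ) e)^2 = Complex.exp (-(2*θ:ℝ) * Complex.I) := by
    rw [hce, sq, ← Complex.exp_add]; congr 1; push_cast; ring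
  have he2 : e^2 + ((starRingEnd ℂ) e)^2 = 2 * ((Real.cos (2*θ) : ℝ) : ℂ) := by
    rw [hA2, hB2, Complex.ofReal_cos, ← Complex.two_cos]
  have haa : a * (starRingEnd ℂ) a = ((‖a‖ : ℝ) : ℂ)^2 := by
    rw [Complex.mul_conj]; norm_cast; exact (Complex.sq_norm a).symm
  have hbb : b * (starRingEnd ℂ) b = ((‖b‖ : ℝ) : ℂ)^2 := by
    rw [Complex.mul_conj]; norm_cast; exact (Complex.sq_norm b).symm
  have hcab : (starRingEnd ℂ) a * (starRingEnd ℂ) b = 1 := by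
    rw [← _root_.map_mul, hab, _root_.map_one]
  have habsC : ((‖a‖ : ℝ) : ℂ) * ((‖b‖ : ℝ) : ℂ) = 1 := by
    norm_cast; rw [← norm_mul, hab, norm_one]
  have hξC : ((ξ:ℝ):ℂ) = (((‖a‖ : ℝ):ℂ) - ((‖b‖ : ℝ):ℂ))^2/4 := by
    rw [hξ]; push_cast; ring
  have hcosC : ((Real.cos (2*θ) : ℝ) : ℂ) = 2*((Real.cos θ : ℝ):ℂ)^2 - 1 := by
    have := Real.cos_two_mul θ
    rw [this]; push_cast; ring
  have hstar1 : star (e * b) = (starRingEnd ℂ) e * (starRingEnd ℂ) b := by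
    simp [mul_comm]
  have hstar2 : star (e * a) = (starRingEnd ℂ) e * (starRingEnd ℂ) a := by
    simp [mul_comm]
  rw [hstar1, hstar2, Complex.ofReal_add, Complex.ofReal_pow]
  set ce := (starRingEnd ℂ) e
  set ca := (starRingEnd ℂ) a
  set cb := (starRingEnd ℂ) b
  set Ra := ((‖a‖ : ℝ) : ℂ)
  set Rb := ((‖b‖ : ℝ) : ℂ)
  set C := ((Real.cos θ : ℝ) : ℂ)
  linear_combination (e^2/4) * hab + (ce^2/4) * hcab + (e*ce/4) * haa + (e*ce/4) * hbb
    + ((Ra^2 + Rb^2)/4) * he + (1/4) * he2 + (1/2) * hcosC + (-1 : ℂ) * hξC + (1/2) * habsC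

lemma det5 (d a1 a2 a3 a4 b1 b2 b3 b4 : ℂ) :
    det !![d, a1, 0, 0, 0; b1, d, a2, 0, 0; 0, b2, d, a3, 0; 0, 0, b3, d, a4; 0, 0, 0, b4, d]
    = d^5 - d^3*(a1*b1 + a2*b2 + a3*b3 + a4*b4)
      + d*(a1*b1*(a3*b3) + a1*b1*(a4*b4) + a2*b2*(a4*b4)) := by
  simp [Matrix.det_succ_row_zero, Fin.sum_univ_succ, Fin.succAbove]
  ring

lemma matrix_eq (A : Matrix (Fin 5) (Fin 5) ℂ) (hA : IsReciprocal A) (θ lam : ℝ) :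
    RePart θ A - (lam : ℂ) • 1 =
    !![-(lam:ℂ), 2⁻¹ * (Complex.exp (θ * Complex.I) * A 0 1 + star (Complex.exp (θ * Complex.I) * A 1 0)), 0, 0, 0;
        2⁻¹ * (Complex.exp (θ * Complex.I) * A 1 0 + star (Complex.exp (θ * Complex.I) * A 0 1)), -(lam:ℂ), 2⁻¹ * (Complex.exp (θ * Complex.I) * A 1 2 + star (Complex.exp (θ * Complex.I) * A 2 1)), 0, 0;
        0, 2⁻¹ * (Complex.exp (θ * Complex.I) * A 2 1 + star (Complex.exp (θ * Complex.I) * A 1 2)), -(lam:ℂ), 2⁻¹ * (Complex.exp (θ * Complex.I) * A 2 3 + star (Complex.exp (θ * Complex.I) * A 3 2)), 0;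
        0, 0, 2⁻¹ * (Complex.exp (θ * Complex.I) * A 3 2 + star (Complex.exp (θ * Complex.I) * A 2 3)), -(lam:ℂ), 2⁻¹ * (Complex.exp (θ * Complex.I) * A 3 4 + star (Complex.exp (θ * Complex.I) * A 4 3));
        0, 0, 0, 2⁻¹ * (Complex.exp (θ * Complex.I) * A 4 3 + star (Complex.exp (θ * Complex.I) * A 3 4)), -(lam:ℂ)] := by
  obtain ⟨hz, -⟩ := hA
  have z00 : A 0 0 = 0 := hz 0 0 (by decide)
  have z02 : A 0 2 = 0 := hz 0 2 (by decide)
  have z03 : A 0 3 = 0 := hz 0 3 (by decide)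
  have z04 : A 0 4 = 0 := hz 0 4 (by decide)
  have z11 : A 1 1 = 0 := hz 1 1 (by decide)
  have z13 : A 1 3 = 0 := hz 1 3 (by decide)
  have z14 : A 1 4 = 0 := hz 1 4 (by decide)
  have z20 : A 2 0 = 0 := hz 2 0 (by decide)
  have z22 : A 2 2 = 0 := hz 2 2 (by decide)
  have z24 : A 2 4 = 0 := hz 2 4 (by decide)
  have z30 : A 3 0 = 0 := hz 3 0 (by decide)
  have z31 : A 3 1 = 0 := hz 3 1 (by decide)
  have z33 : A 3 3 = 0 := hz 3 3 (by decide)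
  have z40 : A 4 0 = 0 := hz 4 0 (by decide)
  have z41 : A 4 1 = 0 := hz 4 1 (by decide)
  have z42 : A 4 2 = 0 := hz 4 2 (by decide)
  have z44 : A 4 4 = 0 := hz 4 4 (by decide)
  ext i j
  fin_cases i <;> fin_cases j <;>
    simp [RePart, Matrix.one_apply, z00, z02, z03, z04, z11, z13, z14, z20, z22, z24,
      z30, z31, z33, z40, z41, z42, z44, smul_eq_mul, sub_eq_neg_add, Matrix.vecHead,
      Matrix.vecTail, Function.comp] <;> ring

lemma det_key (A : Matrix (Fin 5) (Fin 5) ℂ) (hA : IsReciprocal A)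
    (ξ₁ ξ₂ ξ₃ ξ₄ : ℝ)
    (h1 : ξ₁ = (‖A 0 1‖ - ‖A 1 0‖) ^ 2 / 4)
    (h2 : ξ₂ = (‖A 1 2‖ - ‖A 2 1‖) ^ 2 / 4)
    (h3 : ξ₃ = (‖A 2 3‖ - ‖A 3 2‖) ^ 2 / 4)
    (h4 : ξ₄ = (‖A 3 4‖ - ‖A 4 3‖) ^ 2 / 4)
    (θ lam : ℝ) :
    (RePart θ A - (lam : ℂ) • 1).det =
    ((-lam * (lam^4
        - lam^2*((ξ₁ + Real.cos θ^2) + (ξ₂ + Real.cos θ^2) + (ξ₃ + Real.cos θ^2)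
            + (ξ₄ + Real.cos θ^2))
        + ((ξ₁ + Real.cos θ^2)*(ξ₃ + Real.cos θ^2) + (ξ₁ + Real.cos θ^2)*(ξ₄ + Real.cos θ^2)
            + (ξ₂ + Real.cos θ^2)*(ξ₄ + Real.cos θ^2))) : ℝ) : ℂ) := by
  have m1 := prod_entry (A 0 1) (A 1 0) (hA.2 0 1 (by decide)) θ ξ₁ h1
  have m2 := prod_entry (A 1 2) (A 2 1) (hA.2 1 2 (by decide)) θ ξ₂ h2
  have m3 := prod_entry (A 2 3) (A 3 2) (hA.2 2 3 (by decide)) θ ξ₃ h3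
  have m4 := prod_entry (A 3 4) (A 4 3) (hA.2 3 4 (by decide)) θ ξ₄ h4
  rw [matrix_eq A hA θ lam, det5, m1, m2, m3, m4]
  push_cast
  ring


set_option maxHeartbeats 2000000 in
/-- Criterion for the Kippenhahn curve of a 5-by-5 reciprocal matrix to consist of
the origin and two non-concentric ellipses. -/
theorem two_noncentral_ellipses_five (A : Matrix (Fin 5) (Fin 5) ℂ) (hA : IsReciprocal A)
    (ξ₁ ξ₂ ξ₃ ξ₄ : ℝ)
    (h1 : ξ₁ = (‖A 0 1‖ - ‖A 1 0‖) ^ 2 / 4)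
    (h2 : ξ₂ = (‖A 1 2‖ - ‖A 2 1‖) ^ 2 / 4)
    (h3 : ξ₃ = (‖A 2 3‖ - ‖A 3 2‖) ^ 2 / 4)
    (h4 : ξ₄ = (‖A 3 4‖ - ‖A 4 3‖) ^ 2 / 4)
    (hnz : ¬ (ξ₁ = 0 ∧ ξ₂ = 0 ∧ ξ₃ = 0 ∧ ξ₄ = 0)) :
    ((∃ X c p : ℝ, p ≠ 0 ∧ ∀ θ lam : ℝ,
      (RePart θ A - (lam : ℂ) • 1).det =
        ((-lam * (lam ^ 4 - 2 * lam ^ 2 * ((X ^ 2 + p ^ 2) * Real.cos θ ^ 2 + c ^ 2)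
            + ((X ^ 2 - p ^ 2) * Real.cos θ ^ 2 + c ^ 2) ^ 2) : ℝ) : ℂ)) ↔
      (ξ₂ * ξ₃ = 0 ∧ ξ₂ + ξ₃ ≠ 0 ∧
        ξ₁ = Real.sqrt 3 / 2 * (ξ₂ + ξ₃) + ξ₃ ∧
        ξ₄ = Real.sqrt 3 / 2 * (ξ₂ + ξ₃) + ξ₂)) ∧
    ((ξ₂ * ξ₃ = 0 ∧ ξ₂ + ξ₃ ≠ 0 ∧
        ξ₁ = Real.sqrt 3 / 2 * (ξ₂ + ξ₃) + ξ₃ ∧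
        ξ₄ = Real.sqrt 3 / 2 * (ξ₂ + ξ₃) + ξ₂) →
      ∀ θ lam : ℝ,
        (RePart θ A - (lam : ℂ) • 1).det =
          ((-lam * (lam ^ 4
              - 2 * lam ^ 2 * ((((Real.sqrt 3 + 1) / 2) ^ 2 + ((Real.sqrt 3 - 1) / 2) ^ 2) *
                  Real.cos θ ^ 2 + ((1 + Real.sqrt 3) * Real.sqrt (ξ₂ + ξ₃) / 2) ^ 2)
              + ((((Real.sqrt 3 + 1) / 2) ^ 2 - ((Real.sqrt 3 - 1) / 2) ^ 2) *
                  Real.cos θ ^ 2 +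
                  ((1 + Real.sqrt 3) * Real.sqrt (ξ₂ + ξ₃) / 2) ^ 2) ^ 2) : ℝ) : ℂ)) := by
  have hξ10 : 0 ≤ ξ₁ := by rw [h1]; positivity
  have hξ20 : 0 ≤ ξ₂ := by rw [h2]; positivity
  have hξ30 : 0 ≤ ξ₃ := by rw [h3]; positivity
  have hξ40 : 0 ≤ ξ₄ := by rw [h4]; positivity
  have hr : Real.sqrt 3 ^ 2 = 3 := Real.sq_sqrt (by norm_num)
  have hr0 : 0 < Real.sqrt 3 := Real.sqrt_pos.mpr (by norm_num)
  have hr2 : Real.sqrt 3 < 2 := by nlinarith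
  have hback : (ξ₂ * ξ₃ = 0 ∧ ξ₂ + ξ₃ ≠ 0 ∧
        ξ₁ = Real.sqrt 3 / 2 * (ξ₂ + ξ₃) + ξ₃ ∧
        ξ₄ = Real.sqrt 3 / 2 * (ξ₂ + ξ₃) + ξ₂) →
      ∀ θ lam : ℝ,
        (RePart θ A - (lam : ℂ) • 1).det =
          ((-lam * (lam ^ 4
              - 2 * lam ^ 2 * ((((Real.sqrt 3 + 1) / 2) ^ 2 + ((Real.sqrt 3 - 1) / 2) ^ 2) *
                  Real.cos θ ^ 2 + ((1 + Real.sqrt 3) * Real.sqrt (ξ₂ + ξ₃) / 2) ^ 2)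
              + ((((Real.sqrt 3 + 1) / 2) ^ 2 - ((Real.sqrt 3 - 1) / 2) ^ 2) *
                  Real.cos θ ^ 2 +
                  ((1 + Real.sqrt 3) * Real.sqrt (ξ₂ + ξ₃) / 2) ^ 2) ^ 2) : ℝ) : ℂ) := by
    rintro ⟨h23, hs, e1, e4⟩ θ lam
    rw [det_key A hA ξ₁ ξ₂ ξ₃ ξ₄ h1 h2 h3 h4 θ lam]
    refine Complex.ofReal_inj.mpr ?_
    have hq : Real.sqrt (ξ₂ + ξ₃) ^ 2 = ξ₂ + ξ₃ := Real.sq_sqrt (by linarith)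
    set r := Real.sqrt 3
    set q := Real.sqrt (ξ₂ + ξ₃)
    set t := Real.cos θ ^ 2 with ht
    rw [e1, e4]
    linear_combination
      (lam*(-(1/4)*ξ₃^2 - (1/2)*ξ₂*ξ₃ - (1/4)*ξ₂^2 + (9/16)*q^4 + (1/4)*r*q^4
        + (1/16)*r^2*q^4 + t*q^2 + (1/2)*t*r*q^2 + t^2) + lam^3*(-(1/2)*q^2 - t)) * hr
      + (lam*((7/4)*ξ₃ + (7/4)*ξ₂ + (7/4)*q^2 + r*ξ₃ + r*ξ₂ + r*q^2 + 3*t + 2*t*r)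
        + lam^3*(-2 - r)) * hq
      + lam * h23
  refine ⟨⟨?_, fun hc => ⟨(Real.sqrt 3 + 1)/2, (1 + Real.sqrt 3) * Real.sqrt (ξ₂ + ξ₃) / 2,
    (Real.sqrt 3 - 1)/2, ?_, hback hc⟩⟩, hback⟩
  swap
  · -- p ≠ 0
    intro h
    have : Real.sqrt 3 = 1 := by
      field_simp at h; linarith
    nlinarith
  -- forward direction
  rintro ⟨X, c, p, -, hid⟩
  have key : ∀ θ lam : ℝ,
      (-lam * (lam^4
        - lam^2*((ξ₁ + Real.cos θ^2) + (ξ₂ + Real.cos θ^2) + (ξ₃ + Real.cos θ^2)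
            + (ξ₄ + Real.cos θ^2))
        + ((ξ₁ + Real.cos θ^2)*(ξ₃ + Real.cos θ^2) + (ξ₁ + Real.cos θ^2)*(ξ₄ + Real.cos θ^2)
            + (ξ₂ + Real.cos θ^2)*(ξ₄ + Real.cos θ^2)))) =
      (-lam * (lam ^ 4 - 2 * lam ^ 2 * ((X ^ 2 + p ^ 2) * Real.cos θ ^ 2 + c ^ 2)
            + ((X ^ 2 - p ^ 2) * Real.cos θ ^ 2 + c ^ 2) ^ 2)) := fun θ lam =>
    Complex.ofReal_inj.mp ((det_key A hA ξ₁ ξ₂ ξ₃ ξ₄ h1 h2 h3 h4 θ lam).symm.trans (hid θ lam))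
  have c0 : Real.cos (Real.pi/2) = 0 := Real.cos_pi_div_two
  have ch : Real.cos (Real.pi/4) ^ 2 = 1/2 := by
    rw [Real.cos_pi_div_four, div_pow, Real.sq_sqrt] <;> norm_num
  have E01 := key (Real.pi/2) 1
  have E02 := key (Real.pi/2) 2
  have Eh1 := key (Real.pi/4) 1
  have Eh2 := key (Real.pi/4) 2
  have E11 := key 0 1
  have E12 := key 0 2
  rw [c0] at E01 E02
  rw [ch] at Eh1 Eh2
  rw [Real.cos_zero] at E11 E12
  -- coefficient equations
  have hσ : ξ₁ + ξ₂ + ξ₃ + ξ₄ = 2*c^2 := by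
    linear_combination (-1/3 : ℝ)*E01 + (1/6 : ℝ)*E02
  have hB0 : ξ₁*ξ₃ + ξ₁*ξ₄ + ξ₂*ξ₄ = c^4 := by
    linear_combination (-4/3 : ℝ)*E01 + (1/6 : ℝ)*E02
  have hBh : 3/4 + (2*ξ₁+ξ₂+ξ₃+2*ξ₄)/2 + (ξ₁*ξ₃+ξ₁*ξ₄+ξ₂*ξ₄)
      = ((X^2-p^2)*(1/2) + c^2)^2 := by
    linear_combination (-4/3 : ℝ)*Eh1 + (1/6 : ℝ)*Eh2
  have hB1 : 3 + (2*ξ₁+ξ₂+ξ₃+2*ξ₄) + (ξ₁*ξ₃+ξ₁*ξ₄+ξ₂*ξ₄)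
      = ((X^2-p^2) + c^2)^2 := by
    linear_combination (-4/3 : ℝ)*E11 + (1/6 : ℝ)*E12
  have hQc : ξ₁*ξ₃ + ξ₁*ξ₄ + ξ₂*ξ₄ = c^4 := hB0
  have hD2 : (X^2 - p^2)^2 = 3 := by
    linear_combination (-2 : ℝ)*hB1 + (4 : ℝ)*hBh + (-2 : ℝ)*hB0
  have hL : 2*ξ₁ + ξ₂ + ξ₃ + 2*ξ₄ = 2*((X^2 - p^2)*c^2) := by
    linear_combination (4 : ℝ)*hBh - hB1 - (3 : ℝ)*hB0
  clear key E01 E02 Eh1 Eh2 E11 E12 hid hB0 hBh hB1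
  have hcases : (X^2 - p^2 - Real.sqrt 3) * (X^2 - p^2 + Real.sqrt 3) = 0 := by
    linear_combination hD2 - hr
  rcases mul_eq_zero.mp hcases with hD | hD
  · -- D = sqrt 3
    have hDr : X^2 - p^2 = Real.sqrt 3 := by linarith
    have hLσ : 2*ξ₁ + ξ₂ + ξ₃ + 2*ξ₄ = Real.sqrt 3 * (ξ₁ + ξ₂ + ξ₃ + ξ₄) := by
      linear_combination hL + 2*c^2*hDr - Real.sqrt 3 * hσ
    have hQσ : ξ₁*ξ₃ + ξ₁*ξ₄ + ξ₂*ξ₄ = (ξ₁ + ξ₂ + ξ₃ + ξ₄)^2/4 := by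
      linear_combination hQc - ((ξ₁ + ξ₂ + ξ₃ + ξ₄ + 2*c^2)/4) * hσ
    set r := Real.sqrt 3
    have hkey : (ξ₁ - r*(ξ₂+ξ₃)/2 - ξ₃)^2 + ξ₂*ξ₃ = 0 := by
      linear_combination (-1 : ℝ)*hQσ
        + (-((1/2)*ξ₄ + (1/4)*ξ₄*r + (9/4)*ξ₃ + (5/4)*ξ₃*r + (1/4)*ξ₂ + (1/4)*ξ₂*r
            - (3/2)*ξ₁ - (3/4)*ξ₁*r)) * hLσ
        + (-((1/4)*ξ₄^2 + (3/2)*ξ₃*ξ₄ + ξ₃^2 + (1/2)*ξ₂*ξ₄ + ξ₂*ξ₃ - (1/2)*ξ₁*ξ₄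
            + (1/2)*ξ₁*ξ₃ - (1/2)*ξ₁*ξ₂ - (3/4)*ξ₁^2)) * hr
    have h23 : ξ₂ * ξ₃ = 0 := by
      nlinarith [sq_nonneg (ξ₁ - r*(ξ₂+ξ₃)/2 - ξ₃), mul_nonneg hξ20 hξ30]
    have hsq : ξ₁ - r*(ξ₂+ξ₃)/2 - ξ₃ = 0 := by
      have : (ξ₁ - r*(ξ₂+ξ₃)/2 - ξ₃)^2 = 0 := by nlinarith [mul_nonneg hξ20 hξ30]
      exact sq_eq_zero_iff.mp this
    have he1 : ξ₁ = r / 2 * (ξ₂ + ξ₃) + ξ₃ := by linarith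
    have h0 : (2 - r) * (ξ₄ - (r / 2 * (ξ₂ + ξ₃) + ξ₂)) = 0 := by
      linear_combination hLσ + (ξ₂ + ξ₃)*hr - (2 - r)*he1
    have he4 : ξ₄ = r / 2 * (ξ₂ + ξ₃) + ξ₂ := by
      rcases mul_eq_zero.mp h0 with h | h
      · exfalso; linarith
      · linarith
    have hsne : ξ₂ + ξ₃ ≠ 0 := by
      intro h
      have hb2 : ξ₂ = 0 := by linarith
      have hb3 : ξ₃ = 0 := by linarith
      exact hnz ⟨by rw [he1, hb2, hb3]; ring, hb2, hb3, by rw [he4, hb2, hb3]; ring⟩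
    exact ⟨h23, hsne, he1, he4⟩
  · -- D = -sqrt 3 : contradiction
    exfalso
    have hDr : X^2 - p^2 = -Real.sqrt 3 := by linarith
    have hL' : 2*ξ₁ + ξ₂ + ξ₃ + 2*ξ₄ = -(2*Real.sqrt 3*c^2) := by
      linear_combination hL + 2*c^2*hDr
    have hc2 : c^2 ≤ 0 := by nlinarith [hr0]
    have hc20 : c^2 = 0 := le_antisymm hc2 (sq_nonneg c)
    exact hnz ⟨by linarith, by linarith, by linarith, by linarith⟩
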